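/- Suppose p is a-hyperbolic of degree m with Gårding cone Γ, and let b ∈ Γ. Then for every t with 0 < t < ∞, p(a + t·b) ≤ p(a)·(1 + (p′_b(a)/(m·p(a)))·t)ᵐ, where p′_b(a) = (d/ds) p(a + s·b)|_{s=0}. Moreover equality holds for some (equivalently all) t > 0 if and only if all the a-eigenvalues of b are equal: λ₁(b) = λ₂(b) = ⋯ = λₘ(b). -/

import Mathlib

open MvPolynomial

/-- `lam : Fin m → ℝ` is a tuple of `a`-eigenvalues of `x` for the polynomial `p`:
`p(t·a + x) = p(a)·∏ₖ (t + lamₖ)` for all real `t`. -/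
def IsEigen {n : ℕ} (m : ℕ) (p : MvPolynomial (Fin n) ℝ) (a x : Fin n → ℝ)
    (lam : Fin m → ℝ) : Prop :=
  ∀ t : ℝ, eval (t • a + x) p = eval a p * ∏ k, (t + lam k)

/-- `p` is `a`-hyperbolic (of degree `m`): `p(a) > 0` and every `x` has `m` real
`a`-eigenvalues. -/
def IsHyperbolic {n : ℕ} (m : ℕ) (p : MvPolynomial (Fin n) ℝ) (a : Fin n → ℝ) : Prop :=
  0 < eval a p ∧ ∀ x : Fin n → ℝ, ∃ lam : Fin m → ℝ, IsEigen m p a x lam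

/-- The open Gårding cone: the set of `x` all of whose `a`-eigenvalues are positive. -/
def GardingCone {n : ℕ} (m : ℕ) (p : MvPolynomial (Fin n) ℝ) (a : Fin n → ℝ) :
    Set (Fin n → ℝ) :=
  {x | ∃ lam : Fin m → ℝ, IsEigen m p a x lam ∧ ∀ k, 0 < lam k}

-- The ordered (non-decreasing) arrangement `λ↑` of the `a`-eigenvalues of `x`
-- (defined via choice; for a hyperbolic `p` the monotone arrangement exists and is unique).
open scoped Classical in
noncomputable def ordEig {n : ℕ} (m : ℕ) (p : MvPolynomial (Fin n) ℝ) (a x : Fin n → ℝ) :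
    Fin m → ℝ :=
  if h : ∃ lam : Fin m → ℝ, Monotone lam ∧ IsEigen m p a x lam then h.choose
  else fun _ => 0

/-- The directional derivative `p'_b(a) = (d/ds) p(a + s·b) |_{s=0}`. -/
noncomputable def dirDeriv {n : ℕ} (p : MvPolynomial (Fin n) ℝ) (a b : Fin n → ℝ) : ℝ :=
  deriv (fun s : ℝ => eval (a + s • b) p) 0

/-- AM-GM for positive reals. -/
lemma amgm_le {m : ℕ} (hm : 1 ≤ m) (z : Fin m → ℝ) (hz : ∀ k, 0 < z k) :
    ∏ k, z k ≤ ((∑ k, z k) / m) ^ m := by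
  have hne : Nonempty (Fin m) := ⟨⟨0, hm⟩⟩
  set μ : ℝ := (∑ k, z k) / m with hμ
  have hm0 : (0:ℝ) < m := by exact_mod_cast hm
  have hμpos : 0 < μ := div_pos (Finset.sum_pos (fun k _ => hz k) Finset.univ_nonempty) hm0
  have hsz : ∑ k, z k = m * μ := by rw [hμ]; field_simp
  have hsum : ∑ k, (z k / μ - 1) = 0 := by
    rw [Finset.sum_sub_distrib, ← Finset.sum_div, hsz]
    field_simp
    simp
  have h1 : ∏ k, (z k / μ) ≤ ∏ k, Real.exp (z k / μ - 1) := by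
    apply Finset.prod_le_prod (fun k _ => (div_pos (hz k) hμpos).le)
    intro k _
    linarith [Real.add_one_le_exp (z k / μ - 1)]
  rw [← Real.exp_sum, hsum, Real.exp_zero, Finset.prod_div_distrib, Finset.prod_const,
    Finset.card_univ, Fintype.card_fin] at h1
  exact (div_le_one (pow_pos hμpos m)).mp h1

/-- Strict AM-GM when some entry differs from the mean. -/
lemma amgm_lt {m : ℕ} (hm : 1 ≤ m) (z : Fin m → ℝ) (hz : ∀ k, 0 < z k)
    (j : Fin m) (hj : z j ≠ (∑ k, z k) / m) :
    ∏ k, z k < ((∑ k, z k) / m) ^ m := by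
  have hne : Nonempty (Fin m) := ⟨⟨0, hm⟩⟩
  set μ : ℝ := (∑ k, z k) / m with hμ
  have hm0 : (0:ℝ) < m := by exact_mod_cast hm
  have hμpos : 0 < μ := div_pos (Finset.sum_pos (fun k _ => hz k) Finset.univ_nonempty) hm0
  have hsz : ∑ k, z k = m * μ := by rw [hμ]; field_simp
  have hsum : ∑ k, (z k / μ - 1) = 0 := by
    rw [Finset.sum_sub_distrib, ← Finset.sum_div, hsz]
    field_simp
    simp
  have h1 : ∏ k, (z k / μ) < ∏ k, Real.exp (z k / μ - 1) := by
    apply Finset.prod_lt_prod (fun k _ => div_pos (hz k) hμpos)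
    · intro k _
      linarith [Real.add_one_le_exp (z k / μ - 1)]
    · refine ⟨j, Finset.mem_univ j, ?_⟩
      have hne0 : z j / μ - 1 ≠ 0 := by
        intro h
        apply hj
        have := sub_eq_zero.mp h
        field_simp at this
        linarith
      linarith [Real.add_one_lt_exp hne0]
  rw [← Real.exp_sum, hsum, Real.exp_zero, Finset.prod_div_distrib, Finset.prod_const,
    Finset.card_univ, Fintype.card_fin] at h1
  exact (div_lt_one (pow_pos hμpos m)).mp h1

/-- Homogeneous polynomials scale under evaluation. -/
lemma eval_smul_homog {n m : ℕ} {p : MvPolynomial (Fin n) ℝ} (hp : p.IsHomogeneous m)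
    (c : ℝ) (x : Fin n → ℝ) : eval (c • x) p = c ^ m * eval x p := by
  rw [eval_eq', eval_eq', Finset.mul_sum]
  refine Finset.sum_congr rfl fun d hd => ?_
  have hdeg : ∑ i, d i = m := by
    have := hp (MvPolynomial.mem_support_iff.mp hd)
    simp only [Finsupp.weight_apply, Finsupp.sum, smul_eq_mul, Pi.one_apply, mul_one] at this
    rw [← this]
    exact (Finset.sum_subset (Finset.subset_univ _) (fun i _ hi => by
      simpa using Finsupp.notMem_support_iff.mp hi)).symm
  have : ∏ i, (c • x) i ^ d i = c ^ m * ∏ i, x i ^ d i := by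
    simp only [Pi.smul_apply, smul_eq_mul, mul_pow, Finset.prod_mul_distrib,
      Finset.prod_pow_eq_pow_sum, hdeg]
  rw [this]; ring

/-- Factorization of `p` along the line `a + s·b` through the eigenvalues of `b`. -/
lemma eval_line {n m : ℕ} {p : MvPolynomial (Fin n) ℝ} (hp : p.IsHomogeneous m)
    {a b : Fin n → ℝ} {lam : Fin m → ℝ} (heig : IsEigen m p a b lam) (s : ℝ) :
    eval (a + s • b) p = eval a p * ∏ k, (1 + s * lam k) := by
  rcases eq_or_ne s 0 with rfl | hs
  · simp
  · have h1 : a + s • b = s • (s⁻¹ • a + b) := by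
      rw [smul_add, smul_smul, mul_inv_cancel₀ hs, one_smul]
    rw [h1, eval_smul_homog hp, heig s⁻¹]
    rw [show (s:ℝ) ^ m = ∏ _k : Fin m, s by
      simp [Finset.prod_const, Finset.card_univ]]
    rw [mul_left_comm, ← Finset.prod_mul_distrib]
    congr 1
    refine Finset.prod_congr rfl fun k _ => ?_
    field_simp

/-- The directional derivative equals `p(a)·∑ λₖ(b)`. -/
lemma dirDeriv_eq {n m : ℕ} {p : MvPolynomial (Fin n) ℝ} (hp : p.IsHomogeneous m)
    {a b : Fin n → ℝ} {lam : Fin m → ℝ} (heig : IsEigen m p a b lam) :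
    dirDeriv p a b = eval a p * ∑ k, lam k := by
  have hfun : (fun s : ℝ => eval (a + s • b) p)
      = fun s => eval a p * ∏ k, (1 + s * lam k) := funext (eval_line hp heig)
  have hprod : HasDerivAt (fun s : ℝ => ∏ k, (1 + s * lam k))
      (∑ k, (∏ j ∈ Finset.univ.erase k, (1 + (0:ℝ) * lam j)) • lam k) 0 := by
    apply HasDerivAt.fun_finsetProd
    intro k _
    simpa [mul_comm] using ((hasDerivAt_id (0:ℝ)).const_mul (lam k)).const_add 1
  have hprod' : HasDerivAt (fun s : ℝ => ∏ k, (1 + s * lam k)) (∑ k, lam k) 0 := by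
    convert hprod using 1
    refine (Finset.sum_congr rfl fun k _ => ?_)
    simp
  unfold dirDeriv
  rw [hfun]
  have := (hprod'.const_mul (eval a p)).deriv
  simpa using this

/-- Lemma B.1: for `b ∈ Γ` and `0 < t`,
`p(a + t·b) ≤ p(a)·(1 + (p′_b(a)/(m·p(a)))·t)ᵐ`, with equality for some
(equivalently all) `t > 0` iff all the `a`-eigenvalues of `b` are equal. -/
theorem basic_hyperbolic_inequality
    {n m : ℕ} (hm : 1 ≤ m) (p : MvPolynomial (Fin n) ℝ) (hp : p.IsHomogeneous m)
    (a : Fin n → ℝ) (hhyp : IsHyperbolic m p a)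
    (b : Fin n → ℝ) (hb : b ∈ GardingCone m p a) :
    (∀ t : ℝ, 0 < t →
      eval (a + t • b) p ≤
        eval a p * (1 + dirDeriv p a b / (m * eval a p) * t) ^ m) ∧
    ((∃ t : ℝ, 0 < t ∧
        eval (a + t • b) p =
          eval a p * (1 + dirDeriv p a b / (m * eval a p) * t) ^ m) ↔
      ∀ lam : Fin m → ℝ, IsEigen m p a b lam → ∀ j k : Fin m, lam j = lam k) ∧
    ((∀ t : ℝ, 0 < t →
        eval (a + t • b) p =
          eval a p * (1 + dirDeriv p a b / (m * eval a p) * t) ^ m) ↔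
      ∀ lam : Fin m → ℝ, IsEigen m p a b lam → ∀ j k : Fin m, lam j = lam k) := by
  obtain ⟨hpa, -⟩ := hhyp
  obtain ⟨lam, heig, hpos⟩ := hb
  have hne : Nonempty (Fin m) := ⟨⟨0, hm⟩⟩
  have hm0 : (0:ℝ) < m := by exact_mod_cast hm
  have hD : dirDeriv p a b = eval a p * ∑ k, lam k := dirDeriv_eq hp heig
  -- the coefficient is the mean of the shifted eigenvalues
  have hcoef : ∀ t : ℝ, 1 + dirDeriv p a b / (m * eval a p) * t
      = (∑ k, (1 + t * lam k)) / m := by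
    intro t
    have hsum : ∑ k, (1 + t * lam k) = m + t * ∑ k, lam k := by
      rw [Finset.sum_add_distrib, Finset.sum_const, Finset.card_univ, Fintype.card_fin,
        ← Finset.mul_sum]
      simp
    rw [hD, hsum]
    field_simp
  have hz : ∀ t : ℝ, 0 < t → ∀ k, 0 < 1 + t * lam k := by
    intro t ht k
    nlinarith [hpos k]
  -- Part 1: the inequality
  have part1 : ∀ t : ℝ, 0 < t →
      eval (a + t • b) p ≤ eval a p * (1 + dirDeriv p a b / (m * eval a p) * t) ^ m := by
    intro t ht
    rw [eval_line hp heig t, hcoef t]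
    exact mul_le_mul_of_nonneg_left (amgm_le hm _ (hz t ht)) hpa.le
  -- equality at a given t > 0 iff the chosen eigenvalues are all equal
  have heqiff : ∀ t : ℝ, 0 < t →
      ((eval (a + t • b) p = eval a p * (1 + dirDeriv p a b / (m * eval a p) * t) ^ m)
        ↔ ∀ j k : Fin m, lam j = lam k) := by
    intro t ht
    rw [eval_line hp heig t, hcoef t, mul_right_inj' hpa.ne']
    constructor
    · intro heq
      by_contra hcon
      push_neg at hcon
      obtain ⟨j, k, hjk⟩ := hcon
      have hzjk : (1 + t * lam j) ≠ (1 + t * lam k) := by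
        intro h; apply hjk; exact mul_left_cancel₀ ht.ne' (add_left_cancel h)
      set μ : ℝ := (∑ i, (1 + t * lam i)) / m with hμ
      have : (1 + t * lam j) ≠ μ ∨ (1 + t * lam k) ≠ μ := by
        by_contra h; push_neg at h; exact hzjk (h.1.trans h.2.symm)
      rcases this with h | h
      · exact absurd heq (amgm_lt hm _ (hz t ht) j h).ne
      · exact absurd heq (amgm_lt hm _ (hz t ht) k h).ne
    · intro hall
      have k0 : Fin m := ⟨0, hm⟩
      have hconst : ∀ k, (1 + t * lam k) = (1 + t * lam k0) := fun k => by
        rw [hall k k0]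
      have hsum : ∑ k, (1 + t * lam k) = m * (1 + t * lam k0) := by
        rw [Finset.sum_congr rfl fun k _ => hconst k, Finset.sum_const, Finset.card_univ,
          Fintype.card_fin, nsmul_eq_mul]
      rw [hsum]
      rw [Finset.prod_congr rfl fun k _ => hconst k, Finset.prod_const, Finset.card_univ,
        Fintype.card_fin]
      congr 1
      field_simp
  -- equality of all eigen-tuples reduces to the chosen one
  have hC : (∀ j k : Fin m, lam j = lam k) ↔
      (∀ lam' : Fin m → ℝ, IsEigen m p a b lam' → ∀ j k : Fin m, lam' j = lam' k) := by
    constructor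
    · intro hall lam' heig' j k
      have k0 : Fin m := ⟨0, hm⟩
      set c : ℝ := lam k0 with hc
      have hprodc : ∀ t : ℝ, ∏ i, (t + lam' i) = (t + c) ^ m := by
        intro t
        have h1 := heig t
        have h2 := heig' t
        have h3 : eval a p * ∏ i, (t + lam' i) = eval a p * ∏ i, (t + lam i) := by
          rw [← h1, ← h2]
        have h4 : ∏ i, (t + lam' i) = ∏ i, (t + lam i) :=
          mul_left_cancel₀ hpa.ne' h3
        rw [h4, Finset.prod_congr rfl fun i _ => by rw [hall i k0], Finset.prod_const,
          Finset.card_univ, Fintype.card_fin]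
      have key : ∀ j : Fin m, lam' j = c := by
        intro j
        have := hprodc (-lam' j)
        rw [Finset.prod_eq_zero (Finset.mem_univ j) (by ring)] at this
        have := pow_eq_zero_iff (by omega : m ≠ 0) |>.mp this.symm
        linarith [this]
      rw [key j, key k]
    · intro hQ
      exact hQ lam heig
  refine ⟨part1, ?_, ?_⟩
  · constructor
    · rintro ⟨t, ht, heq⟩
      exact hC.mp ((heqiff t ht).mp heq)
    · intro hQ
      exact ⟨1, one_pos, (heqiff 1 one_pos).mpr (hC.mpr hQ)⟩
  · constructor
    · intro hall
      exact hC.mp ((heqiff 1 one_pos).mp (hall 1 one_pos))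
    · intro hQ t ht
      exact (heqiff t ht).mpr (hC.mpr hQ)
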